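/- arXiv:2510.20643 — 3 statements merged into one kernel-verified Lean document; each statement's English description precedes it below -/
import Mathlib

section
/- (Proposition 1, individual-robot sufficient condition for local-to-global safety.) Suppose that for every robot i ∈ ι there is a real number s_i with s_i ≤ −2 ∫_A ρ_{𝒩(i)} · ρ̇_i dμ (a lower bound on robot i's achieved self safety rate ḣ_i^self) such that the individual bound 2 ∫_A ρ̇_i · ρ_{𝒩̄(i)} dμ ≤ β·( ε/N − ∫_A ρ_i · ρ dμ ) + s_i holds. Then the global CBF condition holds: −2 ∑_{i∈ι} ∫_A ρ · ρ̇_i dμ ≥ −β·( ε − ∫_A ρ² dμ ), i.e. ḣ ≥ −β·h. -/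
open MeasureTheory

/-- Proposition 1 (individual-robot sufficient condition for local-to-global
safety): if every robot `i` admits a lower bound `s i` on its achieved self
safety rate `ḣᵢ^self` such that the individual bound
`2∫_A ρ̇ᵢ·ρ_{𝒩̄(i)} ≤ β(ε/N − ∫_A ρᵢ·ρ) + s i` holds, then the global CBF
condition `ḣ ≥ −β·h` holds. -/
theorem individual_bound_implies_global_cbf
    {Ω : Type*} [MeasurableSpace Ω] (μ : Measure Ω) (A : Set Ω)
    (hA : MeasurableSet A)
    {ι : Type*} [Fintype ι] [DecidableEq ι] [Nonempty ι]
    (ρ ρdot : ι → Ω → ℝ)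
    (hρ : ∀ i, MemLp (ρ i) 2 (μ.restrict A))
    (hρdot : ∀ i, MemLp (ρdot i) 2 (μ.restrict A))
    (𝒩 : ι → Finset ι) (hself : ∀ i, i ∈ 𝒩 i)
    (ε β : ℝ) (hβ : 0 < β) (s : ι → ℝ)
    (hs : ∀ i, s i ≤ -2 * ∫ x in A, (∑ j ∈ 𝒩 i, ρ j x) * ρdot i x ∂μ)
    (hbound : ∀ i,
      2 * ∫ x in A, ρdot i x * (∑ j ∈ (𝒩 i)ᶜ, ρ j x) ∂μ
        ≤ β * (ε / (Fintype.card ι : ℝ)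
            - ∫ x in A, ρ i x * (∑ j, ρ j x) ∂μ) + s i) :
    -2 * ∑ i, ∫ x in A, (∑ j, ρ j x) * ρdot i x ∂μ
      ≥ -β * (ε - ∫ x in A, (∑ j, ρ j x) ^ 2 ∂μ) := by
  classical
  have hN : (0:ℝ) < (Fintype.card ι : ℝ) := by
    exact_mod_cast Fintype.card_pos
  -- Memℒp of finite sums of ρ
  have hsum : ∀ (t : Finset ι), MemLp (fun x => ∑ j ∈ t, ρ j x) 2 (μ.restrict A) := by
    intro t
    exact memLp_finset_sum t (fun j _ => hρ j)
  -- integrability of products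
  have hmul : ∀ {f g : Ω → ℝ}, MemLp f 2 (μ.restrict A) → MemLp g 2 (μ.restrict A) →
      Integrable (fun x => f x * g x) (μ.restrict A) := by
    intro f g hf hg
    have h := memLp_one_iff_integrable.mp
      (hg.smul (p := 2) (q := 2) (r := 1) hf)
    simpa [Pi.smul_apply, smul_eq_mul, Pi.mul_def] using h
  have hint : ∀ (t : Finset ι) (i : ι),
      Integrable (fun x => (∑ j ∈ t, ρ j x) * ρdot i x) (μ.restrict A) :=
    fun t i => hmul (hsum t) (hρdot i)
  -- split the integral over 𝒩 i and its complement
  have split : ∀ i, (∫ x in A, (∑ j, ρ j x) * ρdot i x ∂μ)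
      = (∫ x in A, (∑ j ∈ 𝒩 i, ρ j x) * ρdot i x ∂μ)
        + ∫ x in A, (∑ j ∈ (𝒩 i)ᶜ, ρ j x) * ρdot i x ∂μ := by
    intro i
    rw [← integral_add (hint (𝒩 i) i) (hint ((𝒩 i)ᶜ) i)]
    congr 1; funext x
    rw [← add_mul, Finset.sum_add_sum_compl]
  -- key per-robot inequality
  have key : ∀ i, -2 * (∫ x in A, (∑ j, ρ j x) * ρdot i x ∂μ)
      ≥ -(β * (ε / (Fintype.card ι : ℝ) - ∫ x in A, ρ i x * (∑ j, ρ j x) ∂μ)) := by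
    intro i
    have h1 := hs i
    have h2 := hbound i
    have hcomm : (∫ x in A, ρdot i x * (∑ j ∈ (𝒩 i)ᶜ, ρ j x) ∂μ)
        = ∫ x in A, (∑ j ∈ (𝒩 i)ᶜ, ρ j x) * ρdot i x ∂μ := by
      congr 1; funext x; ring
    rw [hcomm] at h2
    rw [split i]
    nlinarith [h1, h2]
  -- the square of the total density as a sum of products
  have hsq : (∫ x in A, (∑ j, ρ j x) ^ 2 ∂μ)
      = ∑ i, ∫ x in A, ρ i x * (∑ j, ρ j x) ∂μ := by
    rw [← integral_finset_sum _ (fun i _ => hmul (hρ i) (hsum Finset.univ))]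
    congr 1; funext x
    rw [← Finset.sum_mul, sq]
  have hcard : (Fintype.card ι : ℝ) * (ε / (Fintype.card ι : ℝ)) = ε := by
    field_simp
  calc -2 * ∑ i, ∫ x in A, (∑ j, ρ j x) * ρdot i x ∂μ
      = ∑ i, -2 * ∫ x in A, (∑ j, ρ j x) * ρdot i x ∂μ := by
        rw [Finset.mul_sum]
    _ ≥ ∑ i, -(β * (ε / (Fintype.card ι : ℝ) - ∫ x in A, ρ i x * (∑ j, ρ j x) ∂μ)) :=
        Finset.sum_le_sum (fun i _ => key i)
    _ = ∑ i, (β * (∫ x in A, ρ i x * (∑ j, ρ j x) ∂μ) - β * (ε / (Fintype.card ι : ℝ))) :=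
        Finset.sum_congr rfl (fun i _ => by ring)
    _ = β * (∑ i, ∫ x in A, ρ i x * (∑ j, ρ j x) ∂μ)
          - (Fintype.card ι : ℝ) * (β * (ε / (Fintype.card ι : ℝ))) := by
        rw [Finset.sum_sub_distrib, Finset.mul_sum, Finset.sum_const, Finset.card_univ,
          nsmul_eq_mul]
    _ = -β * (ε - ∫ x in A, (∑ j, ρ j x) ^ 2 ∂μ) := by
        rw [hsq]
        have hNe : (Fintype.card ι : ℝ) ≠ 0 := ne_of_gt hN
        field_simp
        ring
end

section
/- (Proposition 1, swarm-level sufficient condition for local-to-global safety.) Suppose that for every robot i ∈ ι there is a real number s_i with s_i ≤ −2 ∫_A ρ_{𝒩(i)} · ρ̇_i dμ (a lower bound on robot i's achieved self safety rate ḣ_i^self), and that the swarm-level bound 2 ∑_{i∈ι} ∫_A ρ̇_i · ρ_{𝒩̄(i)} dμ ≤ β·( ε − ∫_A ρ² dμ ) + ∑_{i∈ι} s_i holds. Then the global CBF condition holds: −2 ∑_{i∈ι} ∫_A ρ · ρ̇_i dμ ≥ −β·( ε − ∫_A ρ² dμ ), i.e. ḣ ≥ −β·h. -/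
open MeasureTheory

private lemma int_mul_of_L2 {Ω : Type*} [MeasurableSpace Ω] {ν : MeasureTheory.Measure Ω}
    {f g : Ω → ℝ} (hf : MeasureTheory.MemLp f 2 ν) (hg : MeasureTheory.MemLp g 2 ν) :
    MeasureTheory.Integrable (fun x => f x * g x) ν := by
  have h : MeasureTheory.MemLp (g • f) 1 ν :=
    hf.smul hg (hpqr := ⟨by simp [ENNReal.inv_two_add_inv_two]⟩)
  rw [← MeasureTheory.memLp_one_iff_integrable]
  have : (fun x => f x * g x) = g • f := by funext x; simp [mul_comm]
  rw [this]; exact h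

/-- Proposition 1 (swarm-level sufficient condition for local-to-global
safety): if every robot `i` admits a lower bound `s i` on its achieved self
safety rate `ḣᵢ^self`, and the swarm-level bound
`2∑ᵢ∫_A ρ̇ᵢ·ρ_{𝒩̄(i)} ≤ β(ε − ∫_A ρ²) + ∑ᵢ s i` holds, then the global CBF
condition `ḣ ≥ −β·h` holds. -/
theorem swarm_bound_implies_global_cbf
    {Ω : Type*} [MeasurableSpace Ω] (μ : Measure Ω) (A : Set Ω)
    (hA : MeasurableSet A)
    {ι : Type*} [Fintype ι] [DecidableEq ι] [Nonempty ι]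
    (ρ ρdot : ι → Ω → ℝ)
    (hρ : ∀ i, MemLp (ρ i) 2 (μ.restrict A))
    (hρdot : ∀ i, MemLp (ρdot i) 2 (μ.restrict A))
    (𝒩 : ι → Finset ι) (hself : ∀ i, i ∈ 𝒩 i)
    (ε β : ℝ) (hβ : 0 < β) (s : ι → ℝ)
    (hs : ∀ i, s i ≤ -2 * ∫ x in A, (∑ j ∈ 𝒩 i, ρ j x) * ρdot i x ∂μ)
    (hbound :
      2 * ∑ i, ∫ x in A, ρdot i x * (∑ j ∈ (𝒩 i)ᶜ, ρ j x) ∂μ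
        ≤ β * (ε - ∫ x in A, (∑ j, ρ j x) ^ 2 ∂μ) + ∑ i, s i) :
    -2 * ∑ i, ∫ x in A, (∑ j, ρ j x) * ρdot i x ∂μ
      ≥ -β * (ε - ∫ x in A, (∑ j, ρ j x) ^ 2 ∂μ) := by
  -- Split each integral into neighbor part and non-neighbor part.
  have key : ∀ i, (∫ x in A, (∑ j, ρ j x) * ρdot i x ∂μ)
      = (∫ x in A, (∑ j ∈ 𝒩 i, ρ j x) * ρdot i x ∂μ)
        + (∫ x in A, ρdot i x * (∑ j ∈ (𝒩 i)ᶜ, ρ j x) ∂μ) := by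
    intro i
    have h1 : Integrable (fun x => (∑ j ∈ 𝒩 i, ρ j x) * ρdot i x) (μ.restrict A) := by
      exact int_mul_of_L2 (memLp_finset_sum _ (fun j _ => hρ j)) (hρdot i)
    have h2 : Integrable (fun x => ρdot i x * (∑ j ∈ (𝒩 i)ᶜ, ρ j x)) (μ.restrict A) := by
      exact int_mul_of_L2 (hρdot i) (memLp_finset_sum _ (fun j _ => hρ j))
    rw [← integral_add h1 h2]
    congr 1
    funext x
    have : (∑ j, ρ j x) = (∑ j ∈ 𝒩 i, ρ j x) + (∑ j ∈ (𝒩 i)ᶜ, ρ j x) := by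
      rw [Finset.sum_add_sum_compl]
    rw [this]; ring
  simp only [key]
  rw [Finset.sum_add_distrib]
  have hsum : ∑ i, s i ≤ ∑ i, -2 * ∫ x in A, (∑ j ∈ 𝒩 i, ρ j x) * ρdot i x ∂μ :=
    Finset.sum_le_sum fun i _ => hs i
  simp only [← Finset.mul_sum] at hsum
  linarith
end

section
/- (Key implication in the proof of Proposition 1.) For each robot i ∈ ι let β_i ≥ 0, λ_i ∈ ℝ, δ_i ∈ ℝ be given, set h_i = |𝒩(i)|·ε/N − ∫_A ρ_{𝒩(i)}² dμ and ḣ_i = −2 ∫_A ρ_{𝒩(i)} · ρ̇_i dμ + λ_i − β_i·h_i. Suppose every robot satisfies its decentralized CBF constraint ḣ_i ≥ δ_i − β_i·h_i, and that the aggregate inequality ∑_{i∈ι} ( 2 ∫_A ρ̇_i · ρ_{𝒩̄(i)} dμ + λ_i ) ≤ β·h + ∑_{i∈ι} δ_i holds, where h = ε − ∫_A ρ² dμ. Then the global CBF condition holds: ḣ = −2 ∑_{i∈ι} ∫_A ρ · ρ̇_i dμ ≥ −β·h. -/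
set_option maxHeartbeats 1000000


open MeasureTheory

lemma memL2_integrable_mul {Ω : Type*} [MeasurableSpace Ω] {ν : Measure Ω}
    {f g : Ω → ℝ} (hf : MemLp f 2 ν) (hg : MemLp g 2 ν) :
    Integrable (fun x => f x * g x) ν := by
  have h : MemLp (f • g) 1 ν := hg.smul hf (hpqr := ⟨by simp [ENNReal.div_add_div_same, ENNReal.div_self, ENNReal.inv_two_add_inv_two]⟩)
  rw [memLp_one_iff_integrable] at h
  exact (by simpa [Pi.smul_apply, smul_eq_mul] using h : Integrable (f * g) ν)

/-- Key implication in the proof of Proposition 1: if every robot satisfies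
its decentralized CBF constraint `ḣᵢ ≥ δᵢ − βᵢ·hᵢ` and the aggregate
inequality `∑ᵢ (2∫_A ρ̇ᵢ·ρ_{𝒩̄(i)} + lamᵢ) ≤ β·h + ∑ᵢ δᵢ` holds, then the
global CBF condition `ḣ ≥ −β·h` holds. -/
theorem aggregate_inequality_implies_global_cbf
    {Ω : Type*} [MeasurableSpace Ω] (μ : Measure Ω) (A : Set Ω)
    (hA : MeasurableSet A)
    {ι : Type*} [Fintype ι] [DecidableEq ι] [Nonempty ι]
    (ρ ρdot : ι → Ω → ℝ)
    (hρ : ∀ i, MemLp (ρ i) 2 (μ.restrict A))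
    (hρdot : ∀ i, MemLp (ρdot i) 2 (μ.restrict A))
    (𝒩 : ι → Finset ι) (hself : ∀ i, i ∈ 𝒩 i)
    (ε β : ℝ) (hβ : 0 < β)
    (βᵢ lamᵢ δᵢ : ι → ℝ) (hβᵢ : ∀ i, 0 ≤ βᵢ i)
    (hᵢ : ι → ℝ)
    (hhᵢ : ∀ i, hᵢ i = ((𝒩 i).card : ℝ) * ε / (Fintype.card ι : ℝ)
        - ∫ x in A, (∑ j ∈ 𝒩 i, ρ j x) ^ 2 ∂μ)
    (hᵢdot : ι → ℝ)
    (hhᵢdot : ∀ i, hᵢdot i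
        = -2 * (∫ x in A, (∑ j ∈ 𝒩 i, ρ j x) * ρdot i x ∂μ)
            + lamᵢ i - βᵢ i * hᵢ i)
    (hcbfᵢ : ∀ i, hᵢdot i ≥ δᵢ i - βᵢ i * hᵢ i)
    (haggregate :
      ∑ i, (2 * (∫ x in A, ρdot i x * (∑ j ∈ (𝒩 i)ᶜ, ρ j x) ∂μ) + lamᵢ i)
        ≤ β * (ε - ∫ x in A, (∑ j, ρ j x) ^ 2 ∂μ) + ∑ i, δᵢ i) :
    -2 * ∑ i, ∫ x in A, (∑ j, ρ j x) * ρdot i x ∂μ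
      ≥ -β * (ε - ∫ x in A, (∑ j, ρ j x) ^ 2 ∂μ) := by
  -- split each integral
  have hsplit : ∀ i, (∫ x in A, (∑ j, ρ j x) * ρdot i x ∂μ)
      = (∫ x in A, (∑ j ∈ 𝒩 i, ρ j x) * ρdot i x ∂μ)
        + (∫ x in A, ρdot i x * (∑ j ∈ (𝒩 i)ᶜ, ρ j x) ∂μ) := by
    intro i
    have hN : MemLp (fun x => ∑ j ∈ 𝒩 i, ρ j x) 2 (μ.restrict A) :=
      memLp_finset_sum _ fun j _ => hρ j
    have hNc : MemLp (fun x => ∑ j ∈ (𝒩 i)ᶜ, ρ j x) 2 (μ.restrict A) :=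
      memLp_finset_sum _ fun j _ => hρ j
    have h1 : Integrable (fun x => (∑ j ∈ 𝒩 i, ρ j x) * ρdot i x) (μ.restrict A) :=
      memL2_integrable_mul hN (hρdot i)
    have h2 : Integrable (fun x => ρdot i x * (∑ j ∈ (𝒩 i)ᶜ, ρ j x)) (μ.restrict A) :=
      memL2_integrable_mul (hρdot i) hNc
    rw [← integral_add h1 h2]
    apply integral_congr_ae
    filter_upwards with x
    have : (∑ j, ρ j x) = (∑ j ∈ 𝒩 i, ρ j x) + ∑ j ∈ (𝒩 i)ᶜ, ρ j x :=
      (Finset.sum_add_sum_compl (𝒩 i) _).symm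
    rw [this]; ring
  have hkey : ∀ i, -2 * (∫ x in A, (∑ j ∈ 𝒩 i, ρ j x) * ρdot i x ∂μ)
      ≥ δᵢ i - lamᵢ i := by
    intro i
    have := hcbfᵢ i
    rw [hhᵢdot i] at this
    linarith
  have hsum : -2 * ∑ i, (∫ x in A, (∑ j ∈ 𝒩 i, ρ j x) * ρdot i x ∂μ)
      ≥ ∑ i, (δᵢ i - lamᵢ i) := by
    calc ∑ i, (δᵢ i - lamᵢ i)
        ≤ ∑ i, (-2 * ∫ x in A, (∑ j ∈ 𝒩 i, ρ j x) * ρdot i x ∂μ) :=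
          Finset.sum_le_sum fun i _ => hkey i
      _ = -2 * ∑ i, (∫ x in A, (∑ j ∈ 𝒩 i, ρ j x) * ρdot i x ∂μ) := by
          rw [Finset.mul_sum]
  simp only [hsplit, Finset.sum_add_distrib]
  have e1 : ∑ i, (2 * (∫ x in A, ρdot i x * (∑ j ∈ (𝒩 i)ᶜ, ρ j x) ∂μ) + lamᵢ i)
      = 2 * ∑ i, (∫ x in A, ρdot i x * (∑ j ∈ (𝒩 i)ᶜ, ρ j x) ∂μ) + ∑ i, lamᵢ i := by
    rw [Finset.sum_add_distrib, Finset.mul_sum]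
  have e2 : ∑ i, (δᵢ i - lamᵢ i) = ∑ i, δᵢ i - ∑ i, lamᵢ i := Finset.sum_sub_distrib _ _
  rw [e1] at haggregate
  rw [e2] at hsum
  linarith
end
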